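/- Let k ≥ 1 be an integer, let ρ > k be a real number, and let μ > 0 satisfy μ f_{k−1}(μ)/f_k(μ) = ρ. Then μ > ρ − k. -/

import Mathlib

/-- `fpois j μ = ∑_{i ≥ j} e^{−μ} μ^i / i!`, the probability that a Poisson(μ)
random variable is at least `j`. -/
noncomputable def fpois (j : ℕ) (μ : ℝ) : ℝ :=
  ∑' i : ℕ, if j ≤ i then Real.exp (-μ) * μ ^ i / (Nat.factorial i) else 0

lemma psummable (μ : ℝ) :
    Summable (fun i : ℕ => Real.exp (-μ) * μ ^ i / (Nat.factorial i)) := by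
  simpa [mul_div_assoc] using (Real.summable_pow_div_factorial μ).mul_left (Real.exp (-μ))

lemma jsummable (j : ℕ) (μ : ℝ) :
    Summable (fun i : ℕ => if j ≤ i then Real.exp (-μ) * μ ^ i / (Nat.factorial i) else 0) := by
  exact ((psummable μ).indicator {i | j ≤ i}).congr (fun i => by simp [Set.indicator_apply])

lemma fpois_succ (j : ℕ) (μ : ℝ) :
    fpois j μ = Real.exp (-μ) * μ ^ j / (Nat.factorial j) + fpois (j + 1) μ := by
  set P := fun i : ℕ => Real.exp (-μ) * μ ^ i / (Nat.factorial i) with hP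
  have h1 : Summable (fun i : ℕ => if i = j then P i else 0) := by
    apply summable_of_ne_finset_zero (s := {j})
    intro i hi
    simp only [Finset.mem_singleton] at hi
    simp [hi]
  have h2 := jsummable (j + 1) μ
  have key : ∀ i : ℕ, (if j ≤ i then P i else 0)
      = (if i = j then P i else 0) + (if j + 1 ≤ i then P i else 0) := by
    intro i
    rcases lt_trichotomy i j with h | h | h
    · have h1' : ¬ j ≤ i := by omega
      have h2' : i ≠ j := by omega
      have h3' : ¬ j + 1 ≤ i := by omega
      simp [h1', h2', h3']
    · have h3' : ¬ j + 1 ≤ i := by omega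
      simp [h, h3']
    · have h1' : j ≤ i := by omega
      have h2' : i ≠ j := by omega
      have h3' : j + 1 ≤ i := by omega
      simp [h1', h2', h3']
  unfold fpois
  rw [tsum_congr key, Summable.tsum_add h1 h2]
  congr 1
  have := tsum_eq_single (L := SummationFilter.unconditional ℕ) (f := fun i : ℕ => if i = j then P i else 0) j
    (by intro b hb; simp [hb])
  simpa [hP] using this

lemma fpois_pos (j : ℕ) {μ : ℝ} (hμ : 0 < μ) : 0 < fpois j μ := by
  apply Summable.tsum_pos (jsummable j μ) _ j
  · simp only [le_refl, if_true]
    positivity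
  · intro i
    split
    · positivity
    · exact le_refl 0

theorem stmt13 (k : ℕ) (hk : 1 ≤ k) (ρ : ℝ) (hρ : (k : ℝ) < ρ)
    (μ : ℝ) (hμ : 0 < μ) (heq : μ * fpois (k - 1) μ / fpois k μ = ρ) :
    ρ - k < μ := by
  obtain ⟨m, rfl⟩ : ∃ m, k = m + 1 := ⟨k - 1, (Nat.succ_pred_eq_of_pos hk).symm⟩
  have hk1 : m + 1 - 1 = m := rfl
  rw [hk1] at heq
  set f : ℝ := fpois (m + 1) μ with hf
  have hfpos : 0 < f := fpois_pos (m + 1) hμ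
  have hg : 0 < fpois (m + 2) μ := fpois_pos (m + 2) hμ
  have hPlt : Real.exp (-μ) * μ ^ (m + 1) / (Nat.factorial (m + 1)) < f := by
    have := fpois_succ (m + 1) μ
    rw [hf, this]
    exact lt_add_of_pos_right _ hg
  have hfac : ((Nat.factorial (m + 1) : ℝ)) = (m + 1) * (Nat.factorial m) := by
    rw [Nat.factorial_succ]; push_cast; ring
  have hmul : μ * (Real.exp (-μ) * μ ^ m / (Nat.factorial m))
      = ((m : ℝ) + 1) * (Real.exp (-μ) * μ ^ (m + 1) / (Nat.factorial (m + 1))) := by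
    rw [hfac, pow_succ]
    have hfm : (0 : ℝ) < (Nat.factorial m : ℝ) := by positivity
    field_simp
  have hkey : μ * fpois m μ < (μ + ((m : ℝ) + 1)) * f := by
    rw [fpois_succ m μ, mul_add, hmul]
    have h1 : ((m : ℝ) + 1) * (Real.exp (-μ) * μ ^ (m + 1) / (Nat.factorial (m + 1)))
        < ((m : ℝ) + 1) * f := by
      apply mul_lt_mul_of_pos_left hPlt
      positivity
    nlinarith
  have : μ * fpois m μ / f < μ + ((m : ℝ) + 1) := by
    rw [div_lt_iff₀ hfpos]
    exact hkey
  rw [heq] at this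
  push_cast
  linarith
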